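/- Let I(n_1,…,n_k) = Σ_{σ ∈ 𝒟(n_1,…,n_k)} y^{wex(σ)} q^{cr(σ)} denote the generalized-derangement statistic polynomial. Then I(n_1, n_2, …, n_k) = I(n_2, n_3, …, n_k, n_1), i.e., the polynomial is invariant under cyclic shift of the block sizes. -/

import Mathlib

set_option maxHeartbeats 4000000

/-- Number of weak excedances of a permutation of `[n]` (0-indexed: `i ≤ σ i`). -/
def wex {n : ℕ} (σ : Equiv.Perm (Fin n)) : ℕ :=
  (Finset.univ.filter (fun i : Fin n => (i : ℕ) ≤ (σ i : ℕ))).card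

/-- Number of crossings of a permutation of `[n]`. -/
def cr {n : ℕ} (σ : Equiv.Perm (Fin n)) : ℕ :=
  (∑ i : Fin n,
      (Finset.univ.filter
        (fun j : Fin n => (j : ℕ) < (i : ℕ) ∧ (i : ℕ) ≤ (σ j : ℕ) ∧ (σ j : ℕ) < (σ i : ℕ))).card)
  + ∑ i : Fin n,
      (Finset.univ.filter
        (fun j : Fin n => (i : ℕ) < (j : ℕ) ∧ (σ j : ℕ) < (i : ℕ) ∧ (σ i : ℕ) < (σ j : ℕ))).card

/-- Index (0-based) of the block of the specification `ns` containing the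
(1-based) integer `i`. -/
def blockOf (ns : List ℕ) (i : ℕ) : ℕ :=
  ((List.range ns.length).filter (fun j => (ns.take j).sum < i)).length

/-- `I(n_1,…,n_k) = Σ_{σ ∈ 𝒟(n_1,…,n_k)} y^{wex σ} q^{cr σ}`, the sum of the
statistic over generalized derangements of specification `ns`. -/
def Ipoly {R : Type*} [CommRing R] (y q : R) (ns : List ℕ) : R :=
  ∑ σ ∈ Finset.univ.filter
      (fun σ : Equiv.Perm (Fin ns.sum) =>
        ∀ i : Fin ns.sum, blockOf ns ((i : ℕ) + 1) ≠ blockOf ns ((σ i : ℕ) + 1)),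
    y ^ wex σ * q ^ cr σ

/-! ### Basic value lemmas for the rotation -/

lemma rot_val {n : ℕ} (x : Fin (n + 1)) :
    ((finRotate (n + 1)) x : ℕ) = if (x : ℕ) = n then 0 else (x : ℕ) + 1 := by
  rw [finRotate_succ_apply, Fin.val_add_one]
  simp [Fin.ext_iff]

lemma pow_rot_val {n : ℕ} (e : ℕ) (i : Fin (n + 1)) :
    ((finRotate (n + 1) ^ e) i : ℕ) = ((i : ℕ) + e) % (n + 1) := by
  induction e generalizing i with
  | zero => simp [Nat.mod_eq_of_lt i.isLt]
  | succ e ih =>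
    rw [pow_succ, Equiv.Perm.mul_apply, ih (finRotate (n+1) i)]
    rw [rot_val]
    rcases eq_or_ne (i : ℕ) n with h | h
    · rw [if_pos h]
      have h2 : (i : ℕ) + (e + 1) = e + (n + 1) := by omega
      rw [h2, Nat.add_mod_right, Nat.zero_add]
    · rw [if_neg h]
      congr 1
      omega

lemma pow_rot_val' {n : ℕ} (hn : 0 < n) (e : ℕ) (i : Fin n) :
    ((finRotate n ^ e) i : ℕ) = ((i : ℕ) + e) % n := by
  obtain ⟨n0, rfl⟩ := Nat.exists_eq_succ_of_ne_zero hn.ne'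
  exact pow_rot_val e i

/-! ### The balance lemma -/

lemma bal {n : ℕ} (σ : Equiv.Perm (Fin n)) (p : Fin n → Prop) [DecidablePred p] :
    ∑ i : Fin n, (if p i ∧ ¬ p (σ i) then (1 : ℤ) else 0)
      = ∑ i : Fin n, (if ¬ p i ∧ p (σ i) then (1 : ℤ) else 0) := by
  have h1 : ∀ i : Fin n, (if p i ∧ ¬ p (σ i) then (1 : ℤ) else 0)
      = (if p i then 1 else 0) - (if p i ∧ p (σ i) then 1 else 0) := by
    intro i; by_cases h : p i <;> by_cases h' : p (σ i) <;> simp [h, h']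
  have h2 : ∀ i : Fin n, (if ¬ p i ∧ p (σ i) then (1 : ℤ) else 0)
      = (if p (σ i) then 1 else 0) - (if p i ∧ p (σ i) then 1 else 0) := by
    intro i; by_cases h : p i <;> by_cases h' : p (σ i) <;> simp [h, h']
  simp only [h1, h2, Finset.sum_sub_distrib]
  congr 1
  exact (Equiv.sum_comp σ (fun i => if p i then (1 : ℤ) else 0)).symm

lemma sum_val_eq {m : ℕ} (v : Fin m) :
    ∑ i : Fin m, (if (i : ℕ) = (v : ℕ) then (1 : ℤ) else 0) = 1 := by
  have h : ∀ i : Fin m, ((i : ℕ) = (v : ℕ)) = (i = v) := by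
    intro i; simp [Fin.ext_iff]
  simp only [h]
  simp

/-! ### Invariance of `wex` under conjugation by the rotation -/

lemma wex_int {n : ℕ} (σ : Equiv.Perm (Fin n)) :
    (wex σ : ℤ) = ∑ i : Fin n, (if (i : ℕ) ≤ (σ i : ℕ) then (1 : ℤ) else 0) := by
  rw [wex, Finset.card_filter]
  push_cast
  simp

lemma wex_conj {n : ℕ} (σ : Equiv.Perm (Fin (n + 1))) :
    wex (finRotate (n + 1) * σ * (finRotate (n + 1))⁻¹) = wex σ := by
  set c := finRotate (n + 1) with hc
  have key : (wex (c * σ * c⁻¹) : ℤ) = (wex σ : ℤ) := by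
    rw [wex_int, wex_int]
    rw [← Equiv.sum_comp c (fun i => if (i : ℕ) ≤ ((c * σ * c⁻¹) i : ℕ) then (1 : ℤ) else 0)]
    have hval : ∀ i : Fin (n+1), (c * σ * c⁻¹) (c i) = c (σ i) := by
      intro i; simp [Equiv.Perm.mul_apply]
    simp only [hval]
    have hpt : ∀ i : Fin (n+1),
        (if ((c i : ℕ)) ≤ ((c (σ i)) : ℕ) then (1:ℤ) else 0)
        = (if (i : ℕ) ≤ ((σ i) : ℕ) then (1:ℤ) else 0)
          + (if (i : ℕ) = n then 1 else 0) - (if ((σ i : ℕ)) = n then 1 else 0) := by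
      intro i
      rw [hc, rot_val, rot_val]
      have := i.isLt; have := (σ i).isLt
      split_ifs <;> omega
    simp only [hpt]
    rw [Finset.sum_sub_distrib, Finset.sum_add_distrib]
    rw [Equiv.sum_comp σ (fun x => if (x : ℕ) = n then (1:ℤ) else 0)]
    ring
  exact_mod_cast key

/-! ### Invariance of `cr` under conjugation by the rotation -/

/-- The pair statistic: arguments `i j a b` stand for `i, j, σ i, σ j`. -/
def Fz {n : ℕ} (i j a b : Fin n) : ℤ :=
  (if (j : ℕ) < (i : ℕ) ∧ (i : ℕ) ≤ (b : ℕ) ∧ (b : ℕ) < (a : ℕ) then 1 else 0)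
  + (if (i : ℕ) < (j : ℕ) ∧ (b : ℕ) < (i : ℕ) ∧ (a : ℕ) < (b : ℕ) then 1 else 0)

lemma cr_int {n : ℕ} (σ : Equiv.Perm (Fin n)) :
    (cr σ : ℤ) = ∑ i : Fin n, ∑ j : Fin n, Fz i j (σ i) (σ j) := by
  rw [cr]
  push_cast
  rw [← Finset.sum_add_distrib]
  apply Finset.sum_congr rfl
  intro i _
  rw [Finset.card_filter, Finset.card_filter]
  push_cast
  rw [← Finset.sum_add_distrib]
  rfl

lemma Fz_shift {n : ℕ} (i j a b : Fin (n + 1)) (hj : (j : ℕ) ≠ n) (ha : (a : ℕ) ≠ n) :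
    Fz (finRotate (n+1) i) (finRotate (n+1) j) (finRotate (n+1) a) (finRotate (n+1) b)
      = Fz i j a b := by
  unfold Fz
  rw [rot_val, rot_val, rot_val, rot_val]
  have := i.isLt; have := j.isLt; have := a.isLt; have := b.isLt
  split_ifs <;> omega

/-- The pointwise discrepancy for the crossing computation. -/
def Dd {n : ℕ} (σ : Equiv.Perm (Fin (n+1))) (i j : Fin (n+1)) : ℤ :=
  Fz (finRotate (n+1) i) (finRotate (n+1) j)
     (finRotate (n+1) (σ i)) (finRotate (n+1) (σ j)) - Fz i j (σ i) (σ j)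

lemma claimA {n : ℕ} (σ : Equiv.Perm (Fin (n+1)))
    (hzv : (σ (Fin.last n) : ℕ) < n) :
    ∑ i : Fin (n+1), Dd σ i (Fin.last n)
      = 1 - (if ((σ⁻¹ (Fin.last n) : Fin (n+1)) : ℕ) ≤ (σ (Fin.last n) : ℕ)
          then (1:ℤ) else 0) := by
  set N : Fin (n+1) := Fin.last n with hN
  set w : Fin (n+1) := σ⁻¹ N with hw
  set z : Fin (n+1) := σ N with hz
  have hNv : (N : ℕ) = n := Fin.val_last n
  have hpt : ∀ i : Fin (n+1), Dd σ i N =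
      ((if (i:ℕ) ≤ (z:ℕ) ∧ ¬((σ i : ℕ) ≤ (z:ℕ)) then (1:ℤ) else 0)
       - (if ¬((i:ℕ) ≤ (z:ℕ)) ∧ ((σ i:ℕ) ≤ (z:ℕ)) then 1 else 0))
      - (if (i:ℕ) = (w:ℕ) ∧ (w:ℕ) ≤ (z:ℕ) then 1 else 0)
      + (if (i:ℕ) = (N:ℕ) then 1 else 0) := by
    intro i
    have h1 : (σ i : ℕ) = n ↔ (i : ℕ) = (w : ℕ) := by
      rw [show ((σ i : ℕ) = n) ↔ (σ i = N) from by rw [Fin.ext_iff, hNv],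
          show ((i:ℕ) = (w:ℕ)) ↔ (i = w) from Fin.val_eq_val i w]
      rw [hw, Equiv.Perm.inv_def, Equiv.eq_symm_apply]
    have h2 : (σ i : ℕ) = (z : ℕ) ↔ (i : ℕ) = n := by
      rw [Fin.val_eq_val, show ((i:ℕ) = n) ↔ (i = N) from by rw [Fin.ext_iff, hNv], hz,
        Equiv.apply_eq_iff_eq]
    have h3 := i.isLt
    have h4 := (σ i).isLt
    have h5 : (w : ℕ) < n + 1 := w.isLt
    rw [Dd, ← hz]
    simp only [Fz, rot_val, hNv]
    split_ifs <;> omega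
  rw [Finset.sum_congr rfl (fun i _ => hpt i)]
  have e1 : ∀ (f g h k : Fin (n+1) → ℤ),
      ∑ i, (f i - g i - h i + k i)
        = ((∑ i, f i) - (∑ i, g i)) - (∑ i, h i) + (∑ i, k i) := by
    intro f g h k
    rw [Finset.sum_add_distrib, Finset.sum_sub_distrib, Finset.sum_sub_distrib]
  rw [e1]
  rw [bal σ (fun x => (x : ℕ) ≤ (z : ℕ))]
  have e2 : ∑ i : Fin (n+1), (if (i:ℕ) = (w:ℕ) ∧ (w:ℕ) ≤ (z:ℕ) then (1:ℤ) else 0)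
      = if (w:ℕ) ≤ (z:ℕ) then 1 else 0 := by
    by_cases hle : (w:ℕ) ≤ (z:ℕ)
    · simp only [hle, and_true]; rw [sum_val_eq w]; simp
    · simp [hle]
  have e3 : ∑ i : Fin (n+1), (if (i:ℕ) = n then (1:ℤ) else 0) = 1 := by
    simpa using sum_val_eq (Fin.last n)
  rw [e2, hNv, e3]
  ring

lemma claimB {n : ℕ} (σ : Equiv.Perm (Fin (n+1)))
    (hzv : (σ (Fin.last n) : ℕ) < n) (hwv : ((σ⁻¹ (Fin.last n) : Fin (n+1)) : ℕ) < n) :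
    ∑ j ∈ Finset.univ.erase (Fin.last n), Dd σ (σ⁻¹ (Fin.last n)) j
      = (if ((σ⁻¹ (Fin.last n) : Fin (n+1)) : ℕ) ≤ (σ (Fin.last n) : ℕ) then (1:ℤ) else 0)
        - 1 := by
  set N : Fin (n+1) := Fin.last n with hN
  set w : Fin (n+1) := σ⁻¹ N with hw
  set z : Fin (n+1) := σ N with hz
  have hNv : (N : ℕ) = n := Fin.val_last n
  have hσw : σ w = N := σ.apply_symm_apply N
  have hpt : ∀ j : Fin (n+1), Dd σ w j =
      ((if ¬((j:ℕ) < (w:ℕ)) ∧ ((σ j : ℕ) < (w:ℕ)) then (1:ℤ) else 0)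
       - (if ((j:ℕ) < (w:ℕ)) ∧ ¬((σ j:ℕ) < (w:ℕ)) then 1 else 0))
      - (if (j:ℕ) = (N:ℕ) ∧ (z:ℕ) < (w:ℕ) then 1 else 0) := by
    intro j
    have h1 : (σ j : ℕ) = n ↔ (j : ℕ) = (w : ℕ) := by
      rw [show ((σ j : ℕ) = n) ↔ (σ j = N) from by rw [Fin.ext_iff, hNv],
          show ((j:ℕ) = (w:ℕ)) ↔ (j = w) from Fin.val_eq_val j w]
      rw [hw, Equiv.Perm.inv_def, Equiv.eq_symm_apply]
    have h2 : (σ j : ℕ) = (z : ℕ) ↔ (j : ℕ) = n := by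
      rw [Fin.val_eq_val, show ((j:ℕ) = n) ↔ (j = N) from by rw [Fin.ext_iff, hNv], hz,
        Equiv.apply_eq_iff_eq]
    have h3 := j.isLt
    have h4 := (σ j).isLt
    have h5 : (σ w : ℕ) = n := by rw [hσw, hNv]
    rw [Dd]
    simp only [Fz, rot_val, hNv, h5]
    split_ifs <;> omega
  have hsplit : ∑ j ∈ Finset.univ.erase N, Dd σ w j
      = (∑ j : Fin (n+1), Dd σ w j) - Dd σ w N := by
    rw [← Finset.add_sum_erase Finset.univ (Dd σ w) (Finset.mem_univ N)]
    ring
  have hDwN : Dd σ w N = 0 := by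
    rw [hpt N]
    have hNz : (σ N : ℕ) = (z : ℕ) := by rw [hz]
    split_ifs <;> omega
  rw [hsplit, hDwN, Finset.sum_congr rfl (fun j _ => hpt j)]
  have e1 : ∀ (f g h : Fin (n+1) → ℤ),
      ∑ i, (f i - g i - h i) = ((∑ i, f i) - (∑ i, g i)) - (∑ i, h i) := by
    intro f g h
    rw [Finset.sum_sub_distrib, Finset.sum_sub_distrib]
  rw [e1]
  rw [← bal σ (fun x => (x : ℕ) < (w : ℕ))]
  have e2 : ∑ j : Fin (n+1), (if (j:ℕ) = (N:ℕ) ∧ (z:ℕ) < (w:ℕ) then (1:ℤ) else 0)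
      = if (z:ℕ) < (w:ℕ) then 1 else 0 := by
    by_cases hlt : (z:ℕ) < (w:ℕ)
    · simp only [hlt, and_true]; rw [sum_val_eq N]; simp
    · simp [hlt]
  rw [e2]
  split_ifs <;> omega

lemma Dd_sum {n : ℕ} (σ : Equiv.Perm (Fin (n+1))) :
    ∑ i : Fin (n+1), ∑ j : Fin (n+1), Dd σ i j = 0 := by
  set N : Fin (n+1) := Fin.last n with hN
  have hNv : (N : ℕ) = n := Fin.val_last n
  set w : Fin (n+1) := σ⁻¹ N with hw
  set z : Fin (n+1) := σ N with hz
  have hD0 : ∀ i j : Fin (n+1), j ≠ N → i ≠ w → Dd σ i j = 0 := by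
    intro i j hj hi
    have hjv : (j : ℕ) ≠ n := by
      intro h; exact hj (Fin.ext (by rw [h, hNv]))
    have hav : ((σ i : ℕ)) ≠ n := by
      intro h
      apply hi
      have : σ i = N := Fin.ext (by rw [h, hNv])
      rw [hw, ← this, Equiv.Perm.inv_def, Equiv.symm_apply_apply]
    rw [Dd, Fz_shift i j (σ i) (σ j) hjv hav]
    ring
  have split1 : ∀ i, ∑ j, Dd σ i j = Dd σ i N + ∑ j ∈ Finset.univ.erase N, Dd σ i j := by
    intro i
    exact (Finset.add_sum_erase Finset.univ (Dd σ i) (Finset.mem_univ N)).symm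
  have split2 : ∑ i, ∑ j ∈ Finset.univ.erase N, Dd σ i j
      = ∑ j ∈ Finset.univ.erase N, Dd σ w j := by
    rw [Finset.sum_comm]
    apply Finset.sum_congr rfl
    intro j hj
    apply Finset.sum_eq_single w
    · intro i _ hiw'
      exact hD0 i j (Finset.ne_of_mem_erase hj) hiw'
    · intro h; exact absurd (Finset.mem_univ w) h
  simp only [split1]
  rw [Finset.sum_add_distrib, split2]
  rcases eq_or_ne z N with hzN | hzN
  · -- fixed point at the top: everything vanishes pointwise
    have hσN : σ N = N := by rw [← hz, hzN]
    have hwN : w = N := by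
      rw [hw, Equiv.Perm.inv_def, Equiv.symm_apply_eq]
      exact hσN.symm
    have t1 : ∀ i, Dd σ i N = 0 := by
      intro i
      rw [Dd, hσN]
      have h1 := i.isLt
      have h2 := (σ i).isLt
      simp only [Fz, rot_val, hNv]
      split_ifs <;> omega
    have t2 : ∀ j, Dd σ w j = 0 := by
      intro j
      rw [Dd, hwN, hσN]
      have h1 := j.isLt
      have h2 := (σ j).isLt
      simp only [Fz, rot_val, hNv]
      split_ifs <;> omega
    rw [Finset.sum_congr rfl (fun i _ => t1 i), Finset.sum_congr rfl (fun j _ => t2 j)]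
    simp
  · have hzv : (z : ℕ) < n := by
      have := z.isLt
      have : (z : ℕ) ≠ n := by
        intro h; exact hzN (Fin.ext (by rw [h, hNv]))
      omega
    have hwN : w ≠ N := by
      intro h
      apply hzN
      rw [hz, ← h, hw, Equiv.Perm.inv_def, Equiv.apply_symm_apply]
      exact h.symm
    have hwv : (w : ℕ) < n := by
      have := w.isLt
      have : (w : ℕ) ≠ n := by
        intro h; exact hwN (Fin.ext (by rw [h, hNv]))
      omega
    rw [claimA σ hzv, claimB σ hzv hwv]
    ring

lemma cr_conj {n : ℕ} (σ : Equiv.Perm (Fin (n + 1))) :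
    cr (finRotate (n + 1) * σ * (finRotate (n + 1))⁻¹) = cr σ := by
  set c := finRotate (n + 1) with hc
  have key : (cr (c * σ * c⁻¹) : ℤ) = (cr σ : ℤ) := by
    rw [cr_int, cr_int]
    rw [← Equiv.sum_comp c
        (fun i => ∑ j, Fz i j ((c * σ * c⁻¹) i) ((c * σ * c⁻¹) j))]
    have hre : ∀ i : Fin (n+1),
        (∑ j, Fz (c i) j ((c * σ * c⁻¹) (c i)) ((c * σ * c⁻¹) j))
        = ∑ j, Fz (c i) (c j) (c (σ i)) (c (σ j)) := by
      intro i
      rw [← Equiv.sum_comp c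
          (fun j => Fz (c i) j ((c * σ * c⁻¹) (c i)) ((c * σ * c⁻¹) j))]
      apply Finset.sum_congr rfl
      intro j _
      have hv : ∀ x : Fin (n+1), (c * σ * c⁻¹) (c x) = c (σ x) := by
        intro x; simp [Equiv.Perm.mul_apply]
      rw [hv i, hv j]
    simp only [hre]
    have hDs := Dd_sum σ
    simp only [Dd, ← hc, Finset.sum_sub_distrib, sub_eq_zero] at hDs
    exact hDs
  exact_mod_cast key

/-! ### Conjugation by powers of the rotation -/

lemma conj_pow_eq {G : Type*} [Group G] (c σ : G) (e : ℕ) :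
    c ^ (e + 1) * σ * (c ^ (e + 1))⁻¹ = c * (c ^ e * σ * (c ^ e)⁻¹) * c⁻¹ := by
  rw [pow_succ']
  group

lemma stat_pow_conj {n : ℕ} (e : ℕ) (σ : Equiv.Perm (Fin (n+1))) :
    wex (finRotate (n+1) ^ e * σ * (finRotate (n+1) ^ e)⁻¹) = wex σ ∧
    cr (finRotate (n+1) ^ e * σ * (finRotate (n+1) ^ e)⁻¹) = cr σ := by
  induction e with
  | zero => simp
  | succ e ih =>
    rw [conj_pow_eq]
    exact ⟨(wex_conj _).trans ih.1, (cr_conj _).trans ih.2⟩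

lemma wex_pow' {n : ℕ} (hn : 0 < n) (e : ℕ) (σ : Equiv.Perm (Fin n)) :
    wex (finRotate n ^ e * σ * (finRotate n ^ e)⁻¹) = wex σ := by
  obtain ⟨n0, rfl⟩ := Nat.exists_eq_succ_of_ne_zero hn.ne'
  exact (stat_pow_conj e σ).1

lemma cr_pow' {n : ℕ} (hn : 0 < n) (e : ℕ) (σ : Equiv.Perm (Fin n)) :
    cr (finRotate n ^ e * σ * (finRotate n ^ e)⁻¹) = cr σ := by
  obtain ⟨n0, rfl⟩ := Nat.exists_eq_succ_of_ne_zero hn.ne'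
  exact (stat_pow_conj e σ).2

/-! ### Invariance under cast -/

lemma wex_cast {a b : ℕ} (h : a = b) (π : Equiv.Perm (Fin a)) :
    wex ((finCongr h).permCongr π) = wex π := by
  subst h
  have : (finCongr rfl).permCongr π = π := by
    ext x
    simp [Equiv.permCongr_apply]
  rw [this]

lemma cr_cast {a b : ℕ} (h : a = b) (π : Equiv.Perm (Fin a)) :
    cr ((finCongr h).permCongr π) = cr π := by
  subst h
  have : (finCongr rfl).permCongr π = π := by
    ext x
    simp [Equiv.permCongr_apply]
  rw [this]

/-! ### Block lemmas -/

lemma blockOf_eq_card (ns : List ℕ) (x : ℕ) :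
    blockOf ns x = ((Finset.range ns.length).filter (fun j => (ns.take j).sum < x)).card := rfl

lemma blockOf_zero (l : List ℕ) : blockOf l 0 = 0 := by simp [blockOf]

lemma blockOf_nil (x : ℕ) : blockOf [] x = 0 := rfl

lemma blockOf_cons (a : ℕ) (l : List ℕ) (x : ℕ) :
    blockOf (a :: l) x = (if 0 < x then 1 else 0) + blockOf l (x - a) := by
  rw [blockOf_eq_card, blockOf_eq_card, Finset.card_filter, Finset.card_filter]
  show (∑ j ∈ Finset.range (l.length + 1), _) = _
  rw [Finset.sum_range_succ']
  simp only [List.take_succ_cons, List.sum_cons, List.take_zero, List.sum_nil]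
  have h1 : ∀ j, (if a + (l.take j).sum < x then 1 else 0)
      = (if (l.take j).sum < x - a then 1 else 0) := by
    intro j; split_ifs <;> omega
  rw [add_comm]; congr 1; apply Finset.sum_congr rfl; intro j _; exact h1 j

lemma blockOf_le (l : List ℕ) (x : ℕ) : blockOf l x ≤ l.length := by
  rw [blockOf_eq_card]
  calc _ ≤ (Finset.range l.length).card := Finset.card_filter_le _ _
    _ = l.length := Finset.card_range _

lemma blockOf_pos (a : ℕ) (l : List ℕ) {x : ℕ} (hx : 0 < x) : 0 < blockOf (a :: l) x := by
  rw [blockOf_cons]; simp [hx]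

lemma blockOf_append_sum (t : List ℕ) (m x : ℕ) (h : t.sum < x) :
    blockOf (t ++ [m]) x = t.length + 1 := by
  induction t generalizing x with
  | nil =>
    simp only [List.nil_append, List.length_nil]
    rw [blockOf_cons, blockOf_nil]
    simp at h
    simp [h]
  | cons a t' ih =>
    rw [List.cons_append, blockOf_cons]
    simp only [List.sum_cons] at h
    rw [ih (x - a) (by omega)]
    simp only [List.length_cons]
    have h0 : 0 < x := by omega
    simp [h0]; omega

lemma blockOf_append_lt (t : List ℕ) (m x : ℕ) (h1 : 0 < x) (h2 : x ≤ t.sum) :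
    blockOf (t ++ [m]) x = blockOf t x := by
  induction t generalizing x with
  | nil => simp at h2; omega
  | cons a t' ih =>
    rw [List.cons_append, blockOf_cons, blockOf_cons]
    rcases Nat.lt_or_ge a x with h | h
    · rw [ih (x - a) (by omega) (by simp only [List.sum_cons] at h2; omega)]
    · have h0 : x - a = 0 := by omega
      rw [h0, blockOf_zero, blockOf_zero]

lemma blk_rot_lt (m : ℕ) (t : List ℕ) {i : ℕ} (hm : 0 < m) (hi : i < m) :
    blockOf (t ++ [m]) ((i + t.sum) % (m + t.sum) + 1) = t.length + 1 := by
  rw [Nat.mod_eq_of_lt (by omega)]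
  exact blockOf_append_sum t m _ (by omega)

lemma blk_rot_ge (m : ℕ) (t : List ℕ) {i : ℕ} (him : m ≤ i) (hi : i < m + t.sum) :
    blockOf (t ++ [m]) ((i + t.sum) % (m + t.sum) + 1) = blockOf t (i - m + 1) := by
  have h1 : i + t.sum = (i - m) + (m + t.sum) := by omega
  rw [h1, Nat.add_mod_right, Nat.mod_eq_of_lt (by omega)]
  exact blockOf_append_lt t m _ (by omega) (by omega)

lemma blk_ns_lt (m : ℕ) (t : List ℕ) {i : ℕ} (hi : i < m) :
    blockOf (m :: t) (i + 1) = 1 := by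
  rw [blockOf_cons]
  have h0 : i + 1 - m = 0 := by omega
  rw [h0, blockOf_zero]
  simp

lemma blk_ns_ge (m : ℕ) (t : List ℕ) {i : ℕ} (him : m ≤ i) :
    blockOf (m :: t) (i + 1) = 1 + blockOf t (i - m + 1) := by
  rw [blockOf_cons]
  have h0 : i + 1 - m = i - m + 1 := by omega
  rw [h0]; simp

lemma tpos {m i : ℕ} (t : List ℕ) (him : m ≤ i) (hi : i < m + t.sum) :
    0 < blockOf t (i - m + 1) := by
  have ht : t ≠ [] := by rintro rfl; simp at hi; omega
  obtain ⟨a, t', rfl⟩ := List.exists_cons_of_ne_nil ht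
  exact blockOf_pos a t' (by omega)

lemma blk_iff (m : ℕ) (t : List ℕ) (hm : 0 < m) {i j : ℕ}
    (hi : i < m + t.sum) (hj : j < m + t.sum) :
    (blockOf (t ++ [m]) ((i + t.sum) % (m + t.sum) + 1)
      = blockOf (t ++ [m]) ((j + t.sum) % (m + t.sum) + 1))
    ↔ (blockOf (m :: t) (i + 1) = blockOf (m :: t) (j + 1)) := by
  rcases Nat.lt_or_ge i m with h1 | h1 <;> rcases Nat.lt_or_ge j m with h2 | h2
  · rw [blk_rot_lt m t hm h1, blk_rot_lt m t hm h2, blk_ns_lt m t h1, blk_ns_lt m t h2]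
    omega
  · rw [blk_rot_lt m t hm h1, blk_rot_ge m t h2 hj, blk_ns_lt m t h1, blk_ns_ge m t h2]
    have := blockOf_le t (j - m + 1)
    have := tpos t h2 hj
    omega
  · rw [blk_rot_ge m t h1 hi, blk_rot_lt m t hm h2, blk_ns_ge m t h1, blk_ns_lt m t h2]
    have := blockOf_le t (i - m + 1)
    have := tpos t h1 hi
    omega
  · rw [blk_rot_ge m t h1 hi, blk_rot_ge m t h2 hj, blk_ns_ge m t h1, blk_ns_ge m t h2]
    omega

/-! ### Main theorem -/

/-- `I(n_1,…,n_k)` is invariant under cyclic shift of the block sizes. -/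
theorem stmt12 (R : Type*) [CommRing R] (y q : R) (ns : List ℕ)
    (hpos : ∀ m ∈ ns, 0 < m) :
    Ipoly y q ns = Ipoly y q (ns.rotate 1) := by
  match ns, hpos with
  | [], _ => rfl
  | m :: t, hpos =>
    have hm : 0 < m := hpos m List.mem_cons_self
    have hrot : (m :: t).rotate 1 = t ++ [m] := by
      rw [List.rotate_cons_succ, List.rotate_zero]
    rw [hrot]
    rw [Ipoly, Ipoly]
    have hs1 : (m :: t).sum = m + t.sum := by simp
    have hs2 : (t ++ [m]).sum = t.sum + m := by simp
    rw [hs1, hs2]  -- may fail: types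
    have h : m + t.sum = t.sum + m := Nat.add_comm m t.sum
    have hn : 0 < m + t.sum := by omega
    set d : Equiv.Perm (Fin (m + t.sum)) := finRotate (m + t.sum) ^ t.sum with hd
    set e : Fin (m + t.sum) ≃ Fin (t.sum + m) := finCongr h with he
    have hdval : ∀ i : Fin (m + t.sum), ((d i : ℕ)) = ((i : ℕ) + t.sum) % (m + t.sum) := by
      intro i; rw [hd]; exact pow_rot_val' hn t.sum i
    have hval : ∀ (σ : Equiv.Perm (Fin (m + t.sum))) (x : Fin (m + t.sum)),
        (e.permCongr (d * σ * d⁻¹)) (e (d x)) = e (d (σ x)) := by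
      intro σ x
      simp [Equiv.permCongr_apply, Equiv.Perm.mul_apply]
    have hmem : ∀ σ : Equiv.Perm (Fin (m + t.sum)),
        (∀ i : Fin (m + t.sum),
            blockOf (m :: t) ((i : ℕ) + 1) ≠ blockOf (m :: t) ((σ i : ℕ) + 1))
        ↔ (∀ i' : Fin (t.sum + m),
            blockOf (t ++ [m]) ((i' : ℕ) + 1)
              ≠ blockOf (t ++ [m]) (((e.permCongr (d * σ * d⁻¹)) i' : ℕ) + 1)) := by
      intro σ
      constructor
      · intro H i'
        set i : Fin (m + t.sum) := d⁻¹ (e.symm i') with hi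
        have h1 : e (d i) = i' := by
          rw [hi]
          simp [Equiv.Perm.inv_def, Equiv.apply_symm_apply]
        rw [← h1, hval σ i]
        have hv1 : ((e (d i) : ℕ)) = (d i : ℕ) := by simp [he]
        have hv2 : ((e (d (σ i)) : ℕ)) = (d (σ i) : ℕ) := by simp [he]
        rw [hv1, hv2, hdval i, hdval (σ i)]
        intro Heq
        exact H i ((blk_iff m t hm i.isLt (σ i).isLt).mp Heq)
      · intro H i
        have := H (e (d i))
        rw [hval σ i] at this
        have hv1 : ((e (d i) : ℕ)) = (d i : ℕ) := by simp [he]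
        have hv2 : ((e (d (σ i)) : ℕ)) = (d (σ i) : ℕ) := by simp [he]
        rw [hv1, hv2, hdval i, hdval (σ i)] at this
        intro Heq
        exact this ((blk_iff m t hm i.isLt (σ i).isLt).mpr Heq)
    apply Finset.sum_nbij' (i := fun σ => e.permCongr (d * σ * d⁻¹))
      (j := fun τ => d⁻¹ * (e.permCongr.symm τ) * d)
    · intro σ hσ
      rw [Finset.mem_filter] at hσ ⊢
      exact ⟨Finset.mem_univ _, (hmem σ).mp hσ.2⟩
    · intro τ hτ
      rw [Finset.mem_filter] at hτ ⊢
      refine ⟨Finset.mem_univ _, ?_⟩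
      have hΦΨ : e.permCongr (d * (d⁻¹ * (e.permCongr.symm τ) * d) * d⁻¹) = τ := by
        have : d * (d⁻¹ * (e.permCongr.symm τ) * d) * d⁻¹ = e.permCongr.symm τ := by group
        rw [this, Equiv.apply_symm_apply]
      apply (hmem (d⁻¹ * (e.permCongr.symm τ) * d)).mpr
      rw [hΦΨ]
      exact hτ.2
    · intro σ _
      have : d⁻¹ * (e.permCongr.symm (e.permCongr (d * σ * d⁻¹))) * d = σ := by
        rw [Equiv.symm_apply_apply]
        group
      exact this
    · intro τ _
      have : d * (d⁻¹ * (e.permCongr.symm τ) * d) * d⁻¹ = e.permCongr.symm τ := by group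
      rw [this, Equiv.apply_symm_apply]
    · intro σ _
      have hwex : wex (e.permCongr (d * σ * d⁻¹)) = wex σ := by
        rw [he]
        rw [wex_cast h (d * σ * d⁻¹)]
        exact wex_pow' hn t.sum σ
      have hcr : cr (e.permCongr (d * σ * d⁻¹)) = cr σ := by
        rw [he]
        rw [cr_cast h (d * σ * d⁻¹)]
        exact cr_pow' hn t.sum σ
      rw [hwex, hcr]
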